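/- arXiv:2406.19359 — 2 statements merged into one kernel-verified Lean document; each statement's English description precedes it below -/
import Mathlib

section
/- For every real μ > 1/2 and every z > 0, s_{μ,μ+2}(z) = z^{μ} ∫₀¹ (1−t²)^{μ−1/2} (1 − 2(μ+1) t²) sin(zt) dt. -/
open Real

/-- The Lommel function `s_{μ,ν}(z)`, defined for `z > 0` by its convergent series. -/
noncomputable def lommelS (μ ν z : ℝ) : ℝ :=
  ∑' k : ℕ, (-1 : ℝ) ^ k * z ^ (μ + 2 * (k : ℝ) + 1) /
    ∏ j ∈ Finset.range (k + 1), ((μ + 2 * (j : ℝ) + 1) ^ 2 - ν ^ 2)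


noncomputable def Iaux (μ : ℝ) (m : ℕ) : ℝ :=
  ∫ t in (0:ℝ)..1, t ^ (2*m+1) * (1 - t^2) ^ (μ - 1/2)

lemma contAux {μ : ℝ} (hμ : 1/2 < μ) (n : ℕ) :
    Continuous fun t : ℝ => (t:ℝ)^n * (1 - t^2) ^ (μ - 1/2) := by
  have h : (0:ℝ) ≤ μ - 1/2 := by linarith
  exact (continuous_pow n).mul
    ((Real.continuous_rpow_const h).comp (by continuity))

lemma derivAux {p : ℝ} (hp : 1 ≤ p) (t : ℝ) :
    HasDerivAt (fun t : ℝ => (1 - t^2) ^ p) (-2 * t * p * (1 - t^2) ^ (p-1)) t := by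
  have h : HasDerivAt (fun t : ℝ => 1 - t^2) (-(2*t)) t := by
    simpa using ((hasDerivAt_pow 2 t).const_sub 1)
  have := h.rpow_const (p := p) (Or.inr hp)
  convert this using 1
  ring

lemma rpow_split {μ : ℝ} (hμ : 1/2 < μ) {x : ℝ} (hx : 0 ≤ x) :
    x ^ (μ + 1/2) = x * x ^ (μ - 1/2) := by
  rcases hx.eq_or_lt with h | h
  · rw [← h, Real.zero_rpow (by linarith), Real.zero_rpow (by linarith), mul_zero]
  · rw [show μ + 1/2 = 1 + (μ - 1/2) by ring, Real.rpow_add h, Real.rpow_one]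

lemma Iaux_zero {μ : ℝ} (hμ : 1/2 < μ) : Iaux μ 0 = 1/(2*μ+1) := by
  have hne : 2*μ+1 ≠ 0 := by linarith
  have hd : ∀ t ∈ Set.uIcc (0:ℝ) 1,
      HasDerivAt (fun t : ℝ => -(1 - t^2) ^ (μ + 1/2) / (2*μ+1))
        (t ^ (2*0+1) * (1 - t^2) ^ (μ - 1/2)) t := by
    intro t _
    have := (derivAux (p := μ + 1/2) (by linarith) t).neg.div_const (2*μ+1)
    refine this.congr_deriv ?_
    rw [show μ + 1/2 - 1 = μ - 1/2 by ring]
    field_simp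
    ring
  have hInt : IntervalIntegrable (fun t : ℝ => t ^ (2*0+1) * (1 - t^2) ^ (μ - 1/2))
      MeasureTheory.volume 0 1 := (contAux hμ _).intervalIntegrable _ _
  have := intervalIntegral.integral_eq_sub_of_hasDerivAt hd hInt
  rw [Iaux, this, show ((1:ℝ)-1^2) = 0 by norm_num, show ((1:ℝ)-0^2) = 1 by norm_num,
    Real.zero_rpow (by linarith : μ + 1/2 ≠ 0), Real.one_rpow]
  ring

lemma Iaux_rec {μ : ℝ} (hμ : 1/2 < μ) (m : ℕ) :
    (2*μ+2*m+3) * Iaux μ (m+1) = (2*m+2) * Iaux μ m := by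
  set a := μ - 1/2 with ha
  have hd : ∀ t ∈ Set.uIcc (0:ℝ) 1,
      HasDerivAt (fun t : ℝ => t^(2*m+2) * (1 - t^2) ^ (μ + 1/2))
        ((2*m+2) * (t^(2*m+1) * (1-t^2)^a)
          - (2*m+2) * (t^(2*(m+1)+1) * (1-t^2)^a)
          - (2*μ+1) * (t^(2*(m+1)+1) * (1-t^2)^a)) t := by
    intro t ht
    rw [Set.uIcc_of_le (by norm_num : (0:ℝ) ≤ 1)] at ht
    have ht2 : (0:ℝ) ≤ 1 - t^2 := by nlinarith [ht.1, ht.2]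
    have h1 := (hasDerivAt_pow (2*m+2) t).mul (derivAux (p := μ + 1/2) (by linarith) t)
    refine h1.congr_deriv ?_
    have hs : (1 - t^2) ^ (μ + 1/2) = (1 - t^2) * (1 - t^2) ^ a := rpow_split hμ ht2
    rw [hs, show μ + 1/2 - 1 = a by rw [ha]; ring]
    push_cast
    ring
  have hc : ∀ n : ℕ, IntervalIntegrable (fun t : ℝ => t ^ n * (1 - t^2) ^ a)
      MeasureTheory.volume 0 1 := fun n => (contAux hμ n).intervalIntegrable _ _
  have hInt : IntervalIntegrable (fun t : ℝ =>
      (2*m+2) * (t^(2*m+1) * (1-t^2)^a)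
        - (2*m+2) * (t^(2*(m+1)+1) * (1-t^2)^a)
        - (2*μ+1) * (t^(2*(m+1)+1) * (1-t^2)^a)) MeasureTheory.volume 0 1 := by
    exact (((hc _).const_mul _).sub ((hc _).const_mul _)).sub ((hc _).const_mul _)
  have hFTC := intervalIntegral.integral_eq_sub_of_hasDerivAt hd hInt
  have hval : (1:ℝ)^(2*m+2) * ((1:ℝ) - 1^2)^(μ+1/2) - (0:ℝ)^(2*m+2) * ((1:ℝ)-0^2)^(μ+1/2) = 0 := by
    rw [show ((1:ℝ)-1^2) = 0 by norm_num, Real.zero_rpow (by linarith : μ + 1/2 ≠ 0)]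
    simp
  rw [hval] at hFTC
  rw [intervalIntegral.integral_sub (((hc _).const_mul _).sub ((hc _).const_mul _))
      ((hc _).const_mul _),
    intervalIntegral.integral_sub ((hc _).const_mul _) ((hc _).const_mul _),
    intervalIntegral.integral_const_mul, intervalIntegral.integral_const_mul,
    intervalIntegral.integral_const_mul] at hFTC
  have e1 : Iaux μ m = ∫ t in (0:ℝ)..1, t^(2*m+1) * (1-t^2)^a := rfl
  have e2 : Iaux μ (m+1) = ∫ t in (0:ℝ)..1, t^(2*(m+1)+1) * (1-t^2)^a := rfl
  rw [← e1, ← e2] at hFTC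
  linarith [hFTC]


lemma Qpos {μ : ℝ} (hμ : 1/2 < μ) (n : ℕ) :
    0 < ∏ i ∈ Finset.range n, (2*μ+2*(i:ℝ)+1) :=
  Finset.prod_pos fun i _ => by
    have : (0:ℝ) ≤ (i:ℝ) := Nat.cast_nonneg i
    linarith

lemma QI {μ : ℝ} (hμ : 1/2 < μ) : ∀ k : ℕ,
    (∏ i ∈ Finset.range (k+1), (2*μ+2*(i:ℝ)+1)) * Iaux μ k
      = 2^k * (Nat.factorial k : ℝ)
  | 0 => by
    simp [Finset.prod_range_one, Iaux_zero hμ]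
    field_simp
  | (k+1) => by
    rw [Finset.prod_range_succ]
    have h1 := Iaux_rec hμ k
    have IH := QI hμ k
    push_cast [Nat.factorial_succ] at h1 IH ⊢
    linear_combination (∏ i ∈ Finset.range (k+1), (2*μ+2*(i:ℝ)+1)) * h1
      + (2*(k:ℝ)+2) * IH

lemma PQ (μ : ℝ) : ∀ k : ℕ,
    (∏ j ∈ Finset.range (k+1), ((μ+2*(j:ℝ)+1)^2 - (μ+2)^2))
      * ((2*(k:ℝ)+1)*(2*μ+1)*(2^k * (Nat.factorial k : ℝ)))
    = -((Nat.factorial (2*k+1) : ℝ) * ∏ i ∈ Finset.range (k+2), (2*μ+2*(i:ℝ)+1))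
  | 0 => by
    simp [Finset.prod_range_succ, Finset.prod_range_one]
    ring
  | (k+1) => by
    have IH := PQ μ k
    rw [Finset.prod_range_succ (f := fun j => ((μ+2*(j:ℝ)+1)^2 - (μ+2)^2)),
      Finset.prod_range_succ (f := fun i => (2*μ+2*(i:ℝ)+1))]
    have hf : ((Nat.factorial (2*(k+1)+1) : ℕ) : ℝ)
        = (2*(k:ℝ)+3)*(2*(k:ℝ)+2)*((Nat.factorial (2*k+1) : ℕ) : ℝ) := by
      rw [show 2*(k+1)+1 = (2*k+1)+1+1 by ring]
      push_cast [Nat.factorial_succ]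
      ring
    rw [hf]
    push_cast [Nat.factorial_succ] at IH ⊢
    linear_combination ((2*μ+2*(k:ℝ)+5)*(2*(k:ℝ)+3)*2*((k:ℝ)+1)) * IH

lemma keyCoeff {μ : ℝ} (hμ : 1/2 < μ) (k : ℕ) :
    (∏ j ∈ Finset.range (k+1), ((μ+2*(j:ℝ)+1)^2 - (μ+2)^2))
      * (Iaux μ k - 2*(μ+1)*Iaux μ (k+1))
    = (Nat.factorial (2*k+1) : ℝ) := by
  have hQ1 := QI hμ k
  have hQ2 := QI hμ (k+1)
  have hPQ := PQ μ k
  have hsplit : (∏ i ∈ Finset.range (k+2), (2*μ+2*(i:ℝ)+1))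
      = (∏ i ∈ Finset.range (k+1), (2*μ+2*(i:ℝ)+1)) * (2*μ+2*(((k+1):ℕ):ℝ)+1) :=
    Finset.prod_range_succ _ _
  rw [hsplit] at hPQ
  rw [Finset.prod_range_succ] at hQ2
  have hne : (∏ i ∈ Finset.range (k+1), (2*μ+2*(i:ℝ)+1)) * (2*μ+2*(((k+1):ℕ):ℝ)+1) ≠ 0 := by
    rw [← hsplit]; exact (Qpos hμ (k+2)).ne'
  apply mul_right_cancel₀ hne
  push_cast [Nat.factorial_succ] at hQ1 hQ2 hPQ hne ⊢
  linear_combination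
    ((∏ j ∈ Finset.range (k+1), ((μ+2*(j:ℝ)+1)^2 - (μ+2)^2)) * (2*μ+2*(k:ℝ)+3)) * hQ1
    - (2*(μ+1) * (∏ j ∈ Finset.range (k+1), ((μ+2*(j:ℝ)+1)^2 - (μ+2)^2))) * hQ2
    - hPQ



noncomputable def faux (μ z : ℝ) (hμ : 1/2 < μ) (m : ℕ) : C(ℝ, ℝ) :=
  ⟨fun t => ((-1:ℝ)^m * z^(2*m+1) / (Nat.factorial (2*m+1) : ℝ)) *
      (t^(2*m+1) * (1 - t^2)^(μ - 1/2) * (1 - 2*(μ+1)*t^2)),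
    continuous_const.mul ((contAux hμ (2*m+1)).mul (by continuity))⟩

theorem stmt17 (μ : ℝ) (hμ : 1/2 < μ) (z : ℝ) (hz : 0 < z) :
    lommelS μ (μ + 2) z = z ^ μ *
      ∫ t in (0:ℝ)..1,
        (1 - t ^ 2) ^ (μ - 1/2) * (1 - 2 * (μ + 1) * t ^ 2) * Real.sin (z * t) := by
  have ha : (0:ℝ) ≤ μ - 1/2 := by linarith
  -- norm bound and summability
  have hb : ∀ m : ℕ, ∀ t ∈ Set.Icc (0:ℝ) 1,
      |faux μ z hμ m t| ≤ z^(2*m+1)/(Nat.factorial (2*m+1) : ℝ) * (1+2*(μ+1)) := by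
    intro m t ht
    have h1 : |(-1:ℝ)^m * z^(2*m+1) / (Nat.factorial (2*m+1) : ℝ)|
        = z^(2*m+1)/(Nat.factorial (2*m+1) : ℝ) := by
      rw [abs_div, abs_mul, abs_pow, abs_neg, abs_one, one_pow, one_mul,
        abs_of_pos (pow_pos hz _), abs_of_pos (by positivity : (0:ℝ) < (Nat.factorial (2*m+1) : ℝ))]
    have ht2 : (0:ℝ) ≤ 1 - t^2 := by nlinarith [ht.1, ht.2]
    have h2 : |t^(2*m+1)| ≤ 1 := by
      rw [abs_pow]
      exact pow_le_one₀ (abs_nonneg t) (abs_le.2 ⟨by linarith [ht.1], ht.2⟩)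
    have h3 : |(1 - t^2)^(μ-1/2)| ≤ 1 := by
      rw [abs_of_nonneg (Real.rpow_nonneg ht2 _)]
      exact Real.rpow_le_one ht2 (by nlinarith [ht.1]) ha
    have h4 : |1 - 2*(μ+1)*t^2| ≤ 1+2*(μ+1) := by
      rw [abs_le]
      constructor <;> nlinarith [ht.1, ht.2, sq_nonneg t]
    have : |faux μ z hμ m t| = |(-1:ℝ)^m * z^(2*m+1) / (Nat.factorial (2*m+1) : ℝ)|
        * (|t^(2*m+1)| * |(1 - t^2)^(μ-1/2)| * |1 - 2*(μ+1)*t^2|) := by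
      simp only [faux, ContinuousMap.coe_mk]
      rw [abs_mul, abs_mul, abs_mul]
    rw [this, h1]
    calc z^(2*m+1)/(Nat.factorial (2*m+1) : ℝ) * (|t^(2*m+1)| * |(1 - t^2)^(μ-1/2)| * |1 - 2*(μ+1)*t^2|)
        ≤ z^(2*m+1)/(Nat.factorial (2*m+1) : ℝ) * (1 * 1 * (1+2*(μ+1))) := by
          gcongr
      _ = z^(2*m+1)/(Nat.factorial (2*m+1) : ℝ) * (1+2*(μ+1)) := by ring
  have hmaj : Summable (fun m : ℕ => z^(2*m+1)/(Nat.factorial (2*m+1) : ℝ) * (1+2*(μ+1))) := by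
    have hinj : Function.Injective (fun m : ℕ => 2*m+1) := by intro a b h; simp only at h; omega
    have h := (Real.summable_pow_div_factorial z).comp_injective hinj
    exact h.mul_right _
  have hnorm : Summable fun m : ℕ =>
      ‖(faux μ z hμ m).restrict (⟨Set.uIcc (0:ℝ) 1, isCompact_uIcc⟩ : TopologicalSpace.Compacts ℝ)‖ := by
    refine Summable.of_nonneg_of_le (fun m => norm_nonneg _) (fun m => ?_) hmaj
    refine (ContinuousMap.norm_le _ (by positivity)).2 fun x => ?_
    rw [ContinuousMap.restrict_apply, Real.norm_eq_abs]
    have hx : (x:ℝ) ∈ Set.Icc (0:ℝ) 1 := by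
      have h2 := x.2
      simp only [TopologicalSpace.Compacts.coe_mk, Set.uIcc_of_le (by norm_num : (0:ℝ) ≤ 1)] at h2
      exact h2
    exact hb m _ hx
  have hswap := intervalIntegral.tsum_intervalIntegral_eq_of_summable_norm (a := 0) (b := 1) hnorm
  have hpt : ∀ t : ℝ, ∑' m, faux μ z hμ m t
      = (1 - t^2)^(μ - 1/2) * (1 - 2*(μ+1)*t^2) * Real.sin (z*t) := by
    intro t
    rw [Real.sin_eq_tsum (z*t), ← tsum_mul_left]
    refine tsum_congr fun m => ?_
    simp only [faux, ContinuousMap.coe_mk]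
    ring
  have hIm : ∀ m : ℕ, (∫ t in (0:ℝ)..1, faux μ z hμ m t)
      = ((-1:ℝ)^m * z^(2*m+1) / (Nat.factorial (2*m+1) : ℝ))
        * (Iaux μ m - 2*(μ+1)*Iaux μ (m+1)) := by
    intro m
    have heq : Set.EqOn (fun t => faux μ z hμ m t)
        (fun t : ℝ => ((-1:ℝ)^m * z^(2*m+1) / (Nat.factorial (2*m+1) : ℝ)) *
          ((t^(2*m+1) * (1-t^2)^(μ-1/2)) - 2*(μ+1)*(t^(2*(m+1)+1) * (1-t^2)^(μ-1/2))))
        (Set.uIcc (0:ℝ) 1) := by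
      intro t _
      simp only [faux, ContinuousMap.coe_mk]
      ring
    rw [intervalIntegral.integral_congr heq, intervalIntegral.integral_const_mul,
      intervalIntegral.integral_sub ((contAux hμ _).intervalIntegrable _ _)
        (((contAux hμ _).intervalIntegrable _ _).const_mul _),
      intervalIntegral.integral_const_mul]
    rfl
  have step1 : (∫ t in (0:ℝ)..1,
        (1 - t^2)^(μ - 1/2) * (1 - 2*(μ+1)*t^2) * Real.sin (z*t))
      = ∑' m : ℕ, ((-1:ℝ)^m * z^(2*m+1) / (Nat.factorial (2*m+1) : ℝ))
          * (Iaux μ m - 2*(μ+1)*Iaux μ (m+1)) := by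
    rw [intervalIntegral.integral_congr (g := fun t => ∑' m, faux μ z hμ m t)
      (fun t _ => (hpt t).symm), ← hswap]
    exact tsum_congr hIm
  simp only [lommelS]
  rw [step1, ← tsum_mul_left]
  refine tsum_congr fun k => ?_
  have hkey := keyCoeff hμ k
  have hPne : (∏ j ∈ Finset.range (k+1), ((μ+2*(j:ℝ)+1)^2 - (μ+2)^2)) ≠ 0 := by
    intro h
    rw [h, zero_mul] at hkey
    exact (Nat.cast_pos.mpr (Nat.factorial_pos _)).ne hkey
  have hFne : ((Nat.factorial (2*k+1) : ℕ) : ℝ) ≠ 0 := by positivity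
  have hzz : z ^ (μ + 2*(k:ℝ) + 1) = z^μ * z^(2*k+1) := by
    rw [show μ + 2*(k:ℝ)+1 = μ + (((2*k+1 : ℕ)):ℝ) by push_cast; ring,
      Real.rpow_add hz, Real.rpow_natCast]
  have hD : Iaux μ k - 2*(μ+1)*Iaux μ (k+1)
      = (Nat.factorial (2*k+1) : ℝ) / (∏ j ∈ Finset.range (k+1), ((μ+2*(j:ℝ)+1)^2 - (μ+2)^2)) := by
    rw [eq_div_iff hPne]
    linear_combination hkey
  rw [hzz, hD]
  field_simp
end

section
/- For every real μ > 1/2 and every z > 0, s_{μ,μ+4}(z) = z^{μ} ∫₀¹ (1−t²)^{μ−1/2} (1 − 4(μ+2) t² + (4/3)(μ+2)(μ+3) t⁴) sin(zt) dt. -/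
open Real

namespace Stmt18Aux

open MeasureTheory Set intervalIntegral
open scoped Nat

/-- The basic moment integral `J_n = ∫₀¹ t^(2n+1) (1-t²)^(μ-1/2) dt`. -/
noncomputable def Jint (μ : ℝ) (n : ℕ) : ℝ :=
  ∫ t in (0:ℝ)..1, t ^ (2 * n + 1) * (1 - t ^ 2) ^ (μ - 1/2)

lemma cont_rpow {p : ℝ} (hp : 0 < p) : Continuous fun t : ℝ => (1 - t ^ 2) ^ p := by
  rw [continuous_iff_continuousAt]
  intro x
  exact ContinuousAt.rpow_const (by fun_prop) (Or.inr hp.le)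

lemma contP {μ : ℝ} (hμ : 1/2 < μ) (m : ℕ) :
    Continuous fun t : ℝ => t ^ m * (1 - t ^ 2) ^ (μ - 1/2) :=
  (continuous_pow m).mul (cont_rpow (by linarith))

lemma hasDeriv_aux {μ : ℝ} (hμ : 1/2 < μ) (t : ℝ) :
    HasDerivAt (fun t : ℝ => (1 - t ^ 2) ^ (μ + 1/2))
      (-(2*μ+1) * (t * (1 - t ^ 2) ^ (μ - 1/2))) t := by
  have h1 : HasDerivAt (fun t : ℝ => 1 - t ^ 2) (-(2*t)) t := by
    simpa using ((hasDerivAt_pow 2 t).const_sub 1)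
  have h2 := (Real.hasDerivAt_rpow_const (p := μ + 1/2) (x := 1 - t ^ 2)
      (Or.inr (by linarith))).comp t h1
  refine h2.congr_deriv ?_
  rw [show μ + 1/2 - 1 = μ - 1/2 by ring]
  ring

lemma hasDeriv_anti {μ : ℝ} (hμ : 1/2 < μ) (t : ℝ) :
    HasDerivAt (fun t : ℝ => -((1 - t ^ 2) ^ (μ + 1/2) / (2*μ+1)))
      (t * (1 - t ^ 2) ^ (μ - 1/2)) t := by
  have h := ((hasDeriv_aux hμ t).div_const (2*μ+1)).neg
  refine h.congr_deriv ?_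
  have h2 : (2*μ+1) ≠ 0 := by linarith
  field_simp

lemma Jint_zero {μ : ℝ} (hμ : 1/2 < μ) : Jint μ 0 = 1/(2*μ+1) := by
  have h := intervalIntegral.integral_eq_sub_of_hasDerivAt
    (f := fun t : ℝ => -((1 - t ^ 2) ^ (μ + 1/2) / (2*μ+1)))
    (f' := fun t : ℝ => t * (1 - t ^ 2) ^ (μ - 1/2)) (a := (0:ℝ)) (b := 1)
    (fun t _ => hasDeriv_anti hμ t)
    ((continuous_id.mul (cont_rpow (show (0:ℝ) < μ - 1/2 by linarith))).intervalIntegrable 0 1)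
  have h2 : Jint μ 0 = ∫ t in (0:ℝ)..1, t * (1 - t ^ 2) ^ (μ - 1/2) := by
    rw [Jint]
    apply intervalIntegral.integral_congr
    intro t _
    norm_num
  rw [h2, h]
  have e1 : ((1:ℝ) - 1 ^ 2) = 0 := by norm_num
  have e0 : ((1:ℝ) - 0 ^ 2) = 1 := by norm_num
  simp only [e1, e0, Real.one_rpow, Real.zero_rpow (show μ + 1/2 ≠ 0 by linarith)]
  ring

lemma Jint_rec {μ : ℝ} (hμ : 1/2 < μ) (n : ℕ) :
    (2*μ + 2*(n:ℝ) + 3) * Jint μ (n+1) = (2*(n:ℝ)+2) * Jint μ n := by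
  have hX : Continuous fun t : ℝ => (1 - t ^ 2) ^ (μ - 1/2) :=
    cont_rpow (by linarith)
  have hIBP := intervalIntegral.integral_mul_deriv_eq_deriv_mul
    (a := (0:ℝ)) (b := 1)
    (u := fun t : ℝ => t ^ (2*n+2)) (u' := fun t : ℝ => ((2*n+2 : ℕ) : ℝ) * t ^ (2*n+1))
    (v := fun t : ℝ => -((1 - t ^ 2) ^ (μ + 1/2) / (2*μ+1)))
    (v' := fun t : ℝ => t * (1 - t ^ 2) ^ (μ - 1/2))
    (fun t _ => by simpa using hasDerivAt_pow (2*n+2) t)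
    (fun t _ => hasDeriv_anti hμ t)
    ((by fun_prop : Continuous fun t : ℝ => ((2*n+2 : ℕ) : ℝ) * t ^ (2*n+1)).intervalIntegrable 0 1)
    ((continuous_id.mul hX).intervalIntegrable 0 1)
  have hL : (∫ t in (0:ℝ)..1, t ^ (2*n+2) * (t * (1 - t ^ 2) ^ (μ - 1/2))) = Jint μ (n+1) := by
    rw [Jint]
    apply intervalIntegral.integral_congr
    intro t _
    dsimp only
    ring
  have hsplit : (∫ t in (0:ℝ)..1, ((2*n+2 : ℕ) : ℝ) * t ^ (2*n+1) *
      -((1 - t ^ 2) ^ (μ + 1/2) / (2*μ+1)))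
      = -((((2*(n:ℝ)+2) * (Jint μ n - Jint μ (n+1))) / (2*μ+1))) := by
    have hcong : (∫ t in (0:ℝ)..1, ((2*n+2 : ℕ) : ℝ) * t ^ (2*n+1) *
        -((1 - t ^ 2) ^ (μ + 1/2) / (2*μ+1)))
        = ∫ t in (0:ℝ)..1, (-((2*(n:ℝ)+2) / (2*μ+1))) *
            (t ^ (2*n+1) * (1 - t ^ 2) ^ (μ + 1/2)) := by
      apply intervalIntegral.integral_congr
      intro t _
      dsimp only
      push_cast
      ring
    rw [hcong, intervalIntegral.integral_const_mul]
    have hsp : (∫ t in (0:ℝ)..1, t ^ (2*n+1) * (1 - t ^ 2) ^ (μ + 1/2))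
        = Jint μ n - Jint μ (n+1) := by
      have hcong2 : (∫ t in (0:ℝ)..1, t ^ (2*n+1) * (1 - t ^ 2) ^ (μ + 1/2))
          = ∫ t in (0:ℝ)..1,
              (t ^ (2*n+1) * (1 - t ^ 2) ^ (μ - 1/2)
                - t ^ (2*(n+1)+1) * (1 - t ^ 2) ^ (μ - 1/2)) := by
        apply intervalIntegral.integral_congr
        intro t ht
        rw [Set.uIcc_of_le (by norm_num : (0:ℝ) ≤ 1)] at ht
        have h0 : (0:ℝ) ≤ 1 - t ^ 2 := by nlinarith [ht.1, ht.2]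
        dsimp only
        have hsp2 : (1 - t ^ 2) ^ (μ + 1/2) = (1 - t ^ 2) ^ (μ - 1/2) * (1 - t ^ 2) := by
          rw [show μ + 1/2 = (μ - 1/2) + 1 by ring, Real.rpow_add' h0 (by linarith),
            Real.rpow_one]
        rw [hsp2]
        ring
      rw [hcong2, intervalIntegral.integral_sub
        ((contP hμ (2*n+1)).intervalIntegrable 0 1)
        ((contP hμ (2*(n+1)+1)).intervalIntegrable 0 1)]
      rfl
    rw [hsp]
    ring
  rw [hL, hsplit] at hIBP
  have h2 : (2*μ+1) ≠ 0 := by linarith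
  norm_num [Real.zero_rpow (show μ + 1/2 ≠ 0 by linarith)] at hIBP
  field_simp at hIBP
  linear_combination hIBP

lemma Jint_closed {μ : ℝ} (hμ : 1/2 < μ) (n : ℕ) :
    Jint μ n * ∏ j ∈ Finset.range (n+1), (2*μ+1+2*(j:ℝ)) = 2^n * (n ! : ℝ) := by
  induction n with
  | zero =>
      rw [Jint_zero hμ, Finset.prod_range_one]
      have h2 : (2*μ+1) ≠ 0 := by linarith
      push_cast
      field_simp
      simp
  | succ n ih =>
      rw [Finset.prod_range_succ]
      have hr := Jint_rec hμ n
      rw [Nat.factorial_succ]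
      push_cast
      push_cast at ih
      linear_combination (∏ j ∈ Finset.range (n+1), (2*μ+1+2*(j:ℝ))) * hr
        + 2 * ((n:ℝ)+1) * ih + Jint μ (n+1) * (2*μ+1+2*((n:ℝ)+1)) * 0
        + (Jint μ (n+1) * ((2*μ+1+2*((n:ℝ)+1)) - (2*μ + 2*(n:ℝ) + 3)))
          * (∏ j ∈ Finset.range (n+1), (2*μ+1+2*(j:ℝ)))

lemma two_sub_ne {k : ℕ} : (2*(k:ℝ) - 1) ≠ 0 := by
  intro h
  have h1 : (2*(k:ℝ)) = 1 := by linarith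
  have h2 : (2*k : ℕ) = 1 := by exact_mod_cast h1
  omega

lemma twoj_sub_three_ne {j : ℕ} : (2*(j:ℝ) - 3) ≠ 0 := by
  intro h
  have h1 : (2*(j:ℝ)) = 3 := by linarith
  have h2 : (2*j : ℕ) = 3 := by exact_mod_cast h1
  omega

lemma odd_prod (n : ℕ) :
    (∏ j ∈ Finset.range (n+1), (2*(j:ℝ) - 3)) * ((2*(n:ℝ)-1)*(2*(n:ℝ)+1)) * 2^n * (n ! : ℝ)
      = 3 * ((2*n+1)! : ℝ) := by
  induction n with
  | zero => norm_num [Finset.prod_range_one]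
  | succ n ih =>
      rw [Finset.prod_range_succ, show 2*(n+1)+1 = (2*n+1)+1+1 from by ring,
        Nat.factorial_succ ((2*n+1)+1), Nat.factorial_succ (2*n+1), Nat.factorial_succ n]
      push_cast
      push_cast at ih
      linear_combination ((2*(n:ℝ)+3)*(2*(n:ℝ)+2)) * ih

lemma prod_denom_split (μ : ℝ) (k : ℕ) :
    (∏ j ∈ Finset.range (k+1), ((μ + 2*(j:ℝ) + 1) ^ 2 - (μ+4) ^ 2))
      = (∏ j ∈ Finset.range (k+1), (2*(j:ℝ) - 3)) *
        (∏ j ∈ Finset.range (k+1), (2*μ + 2*(j:ℝ) + 5)) := by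
  rw [← Finset.prod_mul_distrib]
  apply Finset.prod_congr rfl
  intro j _
  ring

lemma prod_shift (μ : ℝ) (k : ℕ) :
    (∏ j ∈ Finset.range (k+3), (2*μ+1+2*(j:ℝ)))
      = (2*μ+1) * (2*μ+3) * ∏ j ∈ Finset.range (k+1), (2*μ + 2*(j:ℝ) + 5) := by
  rw [show k+3 = (k+1+1)+1 from rfl]
  rw [Finset.prod_range_succ' (fun j => (2*μ+1+2*(j:ℝ))) (k+1+1)]
  rw [Finset.prod_range_succ' (fun j => (2*μ+1+2*(((j+1 : ℕ)):ℝ))) (k+1)]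
  have h : (∏ j ∈ Finset.range (k+1), (2*μ+1+2*(((j+1+1 : ℕ)):ℝ)))
      = ∏ j ∈ Finset.range (k+1), (2*μ + 2*(j:ℝ) + 5) :=
    Finset.prod_congr rfl (fun j _ => by push_cast; ring)
  rw [h]
  push_cast
  ring

lemma termwise {μ : ℝ} (hμ : 1/2 < μ) {z : ℝ} (hz : 0 < z) (k : ℕ) :
    (-1 : ℝ) ^ k * z ^ (μ + 2 * (k : ℝ) + 1) /
        ∏ j ∈ Finset.range (k + 1), ((μ + 2 * (j : ℝ) + 1) ^ 2 - (μ+4) ^ 2)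
      = z ^ μ * (((-1 : ℝ)^k * z^(2*k+1) / ((2*k+1)! : ℝ)) *
          (Jint μ k - 4*(μ+2)*Jint μ (k+1) + (4/3)*(μ+2)*(μ+3)*Jint μ (k+2))) := by
  have hzpow : z ^ (μ + 2 * (k : ℝ) + 1) = z ^ μ * z ^ (2*k+1 : ℕ) := by
    rw [show μ + 2 * (k : ℝ) + 1 = μ + ((2*k+1 : ℕ) : ℝ) by push_cast; ring,
      Real.rpow_add hz, Real.rpow_natCast]
  set a : ℝ := ∏ j ∈ Finset.range (k+1), (2*μ+1+2*(j:ℝ)) with ha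
  have hapos : 0 < a := Finset.prod_pos (fun j _ => by positivity)
  have hc1pos : (0:ℝ) < 2*μ + 2*(k:ℝ) + 3 := by positivity
  have hc2pos : (0:ℝ) < 2*μ + 2*(k:ℝ) + 5 := by positivity
  have hfpos : (0:ℝ) < (k ! : ℝ) := by exact_mod_cast Nat.factorial_pos k
  have hgpos : (0:ℝ) < ((2*k+1)! : ℝ) := by exact_mod_cast Nat.factorial_pos (2*k+1)
  set o : ℝ := ∏ j ∈ Finset.range (k+1), (2*(j:ℝ) - 3) with ho
  have hone : o ≠ 0 := Finset.prod_ne_zero_iff.2 (fun j _ => twoj_sub_three_ne)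
  -- closed forms for the J's
  have hJ0 : Jint μ k * a = 2^k * (k ! : ℝ) := Jint_closed hμ k
  have hJ1 : Jint μ (k+1) * (a * (2*μ + 2*(k:ℝ) + 3)) = 2^(k+1) * (((k:ℝ)+1) * (k ! : ℝ)) := by
    have h := Jint_closed hμ (k+1)
    rw [Finset.prod_range_succ, ← ha, Nat.factorial_succ] at h
    push_cast at h
    linear_combination h
  have hJ2 : Jint μ (k+2) * (a * (2*μ + 2*(k:ℝ) + 3) * (2*μ + 2*(k:ℝ) + 5))
      = 2^(k+2) * ((((k:ℝ)+2) * ((k:ℝ)+1)) * (k ! : ℝ)) := by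
    have h := Jint_closed hμ (k+2)
    rw [show k+2+1 = (k+1)+1+1 from rfl, Finset.prod_range_succ, Finset.prod_range_succ,
      ← ha] at h
    rw [show (k+2)! = (k+2)*((k+1)*(k !)) from by
      rw [show k+2 = (k+1)+1 from rfl, Nat.factorial_succ, Nat.factorial_succ]] at h
    push_cast at h
    linear_combination h
  -- the denominator product
  have hexp : (∏ j ∈ Finset.range (k+3), (2*μ+1+2*(j:ℝ)))
      = a * (2*μ + 2*(k:ℝ) + 3) * (2*μ + 2*(k:ℝ) + 5) := by
    rw [show k+3 = ((k+1)+1)+1 from rfl, Finset.prod_range_succ, Finset.prod_range_succ, ← ha]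
    push_cast
    ring
  have hps := prod_shift μ k
  rw [hexp] at hps
  have hden : (∏ j ∈ Finset.range (k+1), ((μ + 2*(j:ℝ) + 1) ^ 2 - (μ+4) ^ 2))
      * ((2*μ+1) * (2*μ+3)) = o * (a * (2*μ + 2*(k:ℝ) + 3) * (2*μ + 2*(k:ℝ) + 5)) := by
    rw [prod_denom_split μ k, ← ho]
    linear_combination (-o) * hps
  have hodd : o * ((2*(k:ℝ)-1)*(2*(k:ℝ)+1)) * 2^k * (k ! : ℝ) = 3 * ((2*k+1)! : ℝ) :=
    odd_prod k
  -- now pure algebra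
  have h21 : (0:ℝ) < 2*μ+1 := by linarith
  have h23 : (0:ℝ) < 2*μ+3 := by linarith
  have h2k1 : (2*(k:ℝ)-1) ≠ 0 := two_sub_ne
  have h2k1' : (0:ℝ) < (2*(k:ℝ)+1) := by positivity
  have hJk : Jint μ k = 2^k * (k ! : ℝ) / a := by
    rw [eq_div_iff hapos.ne']; exact hJ0
  have hJk1 : Jint μ (k+1) = 2^(k+1) * (((k:ℝ)+1) * (k ! : ℝ)) / (a * (2*μ + 2*(k:ℝ) + 3)) := by
    rw [eq_div_iff (by positivity)]; exact hJ1
  have hJk2 : Jint μ (k+2) = 2^(k+2) * ((((k:ℝ)+2) * ((k:ℝ)+1)) * (k ! : ℝ))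
      / (a * (2*μ + 2*(k:ℝ) + 3) * (2*μ + 2*(k:ℝ) + 5)) := by
    rw [eq_div_iff (by positivity)]; exact hJ2
  have hoval : o = 3 * ((2*k+1)! : ℝ) / (((2*(k:ℝ)-1)*(2*(k:ℝ)+1)) * 2^k * (k ! : ℝ)) := by
    rw [eq_div_iff (by
      refine mul_ne_zero (mul_ne_zero (mul_ne_zero h2k1 h2k1'.ne') ?_) hfpos.ne'
      positivity)]
    linear_combination hodd
  have hAval : (∏ j ∈ Finset.range (k+1), ((μ + 2*(j:ℝ) + 1) ^ 2 - (μ+4) ^ 2))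
      = o * (a * (2*μ + 2*(k:ℝ) + 3) * (2*μ + 2*(k:ℝ) + 5)) / ((2*μ+1) * (2*μ+3)) := by
    rw [eq_div_iff (by positivity)]
    linear_combination hden
  rw [hzpow, hJk, hJk1, hJk2, hAval, hoval]
  field_simp
  ring

lemma swap_lemma {μ : ℝ} (hμ : 1/2 < μ) {z : ℝ} (hz : 0 < z) :
    (∫ t in (0:ℝ)..1,
        (1 - t ^ 2) ^ (μ - 1/2) *
          (1 - 4 * (μ + 2) * t ^ 2 + (4/3) * (μ + 2) * (μ + 3) * t ^ 4) * Real.sin (z * t))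
    = ∑' n : ℕ, (((-1 : ℝ)^n * z^(2*n+1) / ((2*n+1)! : ℝ)) *
        (Jint μ n - 4*(μ+2)*Jint μ (n+1) + (4/3)*(μ+2)*(μ+3)*Jint μ (n+2))) := by
  set G : ℝ → ℝ := fun t => (1 - t ^ 2) ^ (μ - 1/2) *
      (1 - 4 * (μ + 2) * t ^ 2 + (4/3) * (μ + 2) * (μ + 3) * t ^ 4) with hGdef
  have hGc : Continuous G := (cont_rpow (by linarith)).mul (by fun_prop)
  set F : ℕ → ℝ → ℝ := fun n t =>
      G t * ((-1 : ℝ) ^ n * (z * t) ^ (2 * n + 1) / ((2 * n + 1)! : ℝ)) with hFdef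
  have hFc : ∀ n, Continuous (F n) := fun n => by
    rw [hFdef]
    fun_prop
  have hF_int : ∀ n, IntegrableOn (F n) (Ioc (0:ℝ) 1) volume :=
    fun n => (hFc n).integrableOn_Ioc
  obtain ⟨C, hC⟩ := (isCompact_Icc (a := (0:ℝ)) (b := 1)).exists_bound_of_continuousOn
    hGc.continuousOn
  have hCnn : 0 ≤ C := le_trans (norm_nonneg (G 0)) (hC 0 (by norm_num))
  have hbound : ∀ n, ∀ t ∈ Ioc (0:ℝ) 1, ‖F n t‖ ≤ C * (z ^ (2*n+1) / ((2*n+1)! : ℝ)) := by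
    intro n t ht
    have ht0 : 0 < t := ht.1
    have ht1 : t ≤ 1 := ht.2
    have hzt : 0 ≤ z * t := by positivity
    have hztz : z * t ≤ z := by nlinarith
    have hfac : (0:ℝ) < ((2*n+1)! : ℝ) := by exact_mod_cast Nat.factorial_pos (2*n+1)
    rw [hFdef]
    simp only [norm_mul, norm_div, norm_pow, norm_neg, norm_one, one_pow, one_mul]
    rw [Real.norm_of_nonneg hz.le, Real.norm_of_nonneg ht0.le, Real.norm_of_nonneg hfac.le]
    have h1 : ‖G t‖ ≤ C := hC t ⟨ht0.le, ht1⟩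
    have h2' : (z*t) ^ (2*n+1) / ((2*n+1)! : ℝ) ≤ z ^ (2*n+1) / ((2*n+1)! : ℝ) := by
      gcongr
    exact mul_le_mul h1 h2' (by positivity) hCnn
  have hIb : ∀ n, (∫ t in Ioc (0:ℝ) 1, ‖F n t‖) ≤ C * (z ^ (2*n+1) / ((2*n+1)! : ℝ)) := by
    intro n
    have hle := MeasureTheory.setIntegral_mono_on (hF_int n).norm
      (integrableOn_const (by rw [Real.volume_Ioc]; exact ENNReal.ofReal_ne_top))
      measurableSet_Ioc (hbound n)
    calc (∫ t in Ioc (0:ℝ) 1, ‖F n t‖)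
        ≤ ∫ _t in Ioc (0:ℝ) 1, C * (z ^ (2*n+1) / ((2*n+1)! : ℝ)) := hle
      _ = C * (z ^ (2*n+1) / ((2*n+1)! : ℝ)) := by
          rw [setIntegral_const]
          simp [Real.volume_Ioc]
  have hsummable : Summable (fun n : ℕ => ∫ t in Ioc (0:ℝ) 1, ‖F n t‖) := by
    apply Summable.of_nonneg_of_le (fun n => integral_nonneg (fun t => norm_nonneg _)) hIb
    have hinj : Function.Injective (fun n : ℕ => 2*n+1) := fun a b h => by
      simp only at h; omega
    exact ((Real.summable_pow_div_factorial z).comp_injective hinj).mul_left C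
  have hswap := MeasureTheory.integral_tsum_of_summable_integral_norm
    (μ := volume.restrict (Ioc (0:ℝ) 1)) (F := F) (fun n => hF_int n) hsummable
  have hpt : ∀ t : ℝ, (∑' n, F n t) = G t * Real.sin (z * t) := fun t =>
    ((Real.hasSum_sin (z*t)).mul_left (G t)).tsum_eq
  rw [intervalIntegral.integral_of_le (by norm_num : (0:ℝ) ≤ 1)]
  have hGint : (∫ t in Ioc (0:ℝ) 1,
      (1 - t ^ 2) ^ (μ - 1/2) *
        (1 - 4 * (μ + 2) * t ^ 2 + (4/3) * (μ + 2) * (μ + 3) * t ^ 4) * Real.sin (z * t))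
      = ∫ t in Ioc (0:ℝ) 1, ∑' n, F n t :=
    MeasureTheory.integral_congr_ae (Filter.Eventually.of_forall (fun t => (hpt t).symm))
  rw [hGint, ← hswap]
  apply tsum_congr
  intro n
  rw [← intervalIntegral.integral_of_le (by norm_num : (0:ℝ) ≤ 1)]
  have hcg : (∫ t in (0:ℝ)..1, F n t)
      = ∫ t in (0:ℝ)..1, ((-1:ℝ)^n * z^(2*n+1) / ((2*n+1)! : ℝ)) *
          (t ^ (2*n+1) * (1 - t ^ 2) ^ (μ - 1/2)
            - 4*(μ+2) * (t ^ (2*(n+1)+1) * (1 - t ^ 2) ^ (μ - 1/2))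
            + (4/3)*(μ+2)*(μ+3) * (t ^ (2*(n+2)+1) * (1 - t ^ 2) ^ (μ - 1/2))) := by
    apply intervalIntegral.integral_congr
    intro t _
    simp only [hFdef, hGdef]
    rw [mul_pow]
    ring
  rw [hcg, intervalIntegral.integral_const_mul]
  congr 1
  rw [intervalIntegral.integral_add
      (((contP hμ (2*n+1)).intervalIntegrable 0 1).sub
        (((contP hμ (2*(n+1)+1)).intervalIntegrable 0 1).const_mul _))
      (((contP hμ (2*(n+2)+1)).intervalIntegrable 0 1).const_mul _),
    intervalIntegral.integral_sub
      ((contP hμ (2*n+1)).intervalIntegrable 0 1)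
      (((contP hμ (2*(n+1)+1)).intervalIntegrable 0 1).const_mul _),
    intervalIntegral.integral_const_mul, intervalIntegral.integral_const_mul]
  rfl

end Stmt18Aux

theorem stmt18 (μ : ℝ) (hμ : 1/2 < μ) (z : ℝ) (hz : 0 < z) :
    lommelS μ (μ + 4) z = z ^ μ *
      ∫ t in (0:ℝ)..1,
        (1 - t ^ 2) ^ (μ - 1/2) *
          (1 - 4 * (μ + 2) * t ^ 2 + (4/3) * (μ + 2) * (μ + 3) * t ^ 4) * Real.sin (z * t) := by
  rw [lommelS, Stmt18Aux.swap_lemma hμ hz, ← tsum_mul_left]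
  exact tsum_congr (fun k => Stmt18Aux.termwise hμ hz k)
end
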